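/- arXiv:1405.6057 — 6 statements merged into one kernel-verified Lean document; each statement's English description precedes it below -/
import Mathlib

section
/- If Y has the maximum extreme value distribution with location μ ∈ ℝ and dispersion σ > 0, its mean is μ + ℰσ, where ℰ is the Euler–Mascheroni constant: ∫_ℝ y · (1/σ) exp(-(y-μ)/σ) exp(-exp(-(y-μ)/σ)) dy = μ + ℰσ. -/
open MeasureTheory Real Set

lemma gumbel_aux :
    IntegrableOn (fun t : ℝ => Real.log t * Real.exp (-t)) (Set.Ioi 0) ∧
      ∫ t in Set.Ioi (0:ℝ), Real.log t * Real.exp (-t) = -Real.eulerMascheroniConstant := by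
  have hs : (0:ℝ) < (1:ℂ).re := by simp
  have H := mellin_hasDerivAt_of_isBigO_rpow (E := ℂ) (s := 1)
      (f := fun x : ℝ => (Real.exp (-x) : ℂ)) ?_ ?_ (lt_add_one _) ?_ hs
  rotate_left
  · refine (Continuous.continuousOn ?_).locallyIntegrableOn measurableSet_Ioi
    exact Complex.continuous_ofReal.comp (Real.continuous_exp.comp continuous_neg)
  · rw [← Asymptotics.isBigO_norm_left]
    simp_rw [Complex.norm_real,
      Asymptotics.isBigO_norm_left]
    simpa only [neg_one_mul] using (isLittleO_exp_neg_mul_rpow_atTop zero_lt_one _).isBigO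
  · simp_rw [neg_zero, Real.rpow_zero]
    refine Asymptotics.isBigO_const_of_tendsto (?_ : Filter.Tendsto _ _ (nhds (1 : ℂ)))
      one_ne_zero
    rw [(by simp : (1 : ℂ) = Real.exp (-0))]
    exact (Complex.continuous_ofReal.comp
      (Real.continuous_exp.comp continuous_neg)).continuousWithinAt
  have hint : IntegrableOn (fun t : ℝ => Real.log t * Real.exp (-t)) (Set.Ioi 0) := by
    have h1 := H.1
    rw [MellinConvergent] at h1
    have h2 : IntegrableOn (fun t : ℝ => ((Real.log t * Real.exp (-t) : ℝ) : ℂ)) (Set.Ioi 0) := by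
      refine h1.congr_fun (fun t _ => ?_) measurableSet_Ioi
      simp [Complex.ofReal_mul, smul_eq_mul]
    have h3 := h2.re
    exact h3.congr (Filter.Eventually.of_forall fun t => Complex.ofReal_re _)
  refine ⟨hint, ?_⟩
  -- derivative of Gamma at 1
  have h1 := Complex.hasDerivAt_GammaIntegral (s := 1) hs
  have hI : (∫ t : ℝ in Set.Ioi 0, (t : ℂ) ^ ((1:ℂ) - 1) * (Real.log t * Real.exp (-t))) =
      ((∫ t in Set.Ioi (0:ℝ), Real.log t * Real.exp (-t) : ℝ) : ℂ) := by
    have e1 : (∫ t : ℝ in Set.Ioi 0, (t : ℂ) ^ ((1:ℂ) - 1) * (Real.log t * Real.exp (-t))) =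
        ∫ t in Set.Ioi (0:ℝ), ((Real.log t * Real.exp (-t) : ℝ) : ℂ) := by
      refine setIntegral_congr_fun measurableSet_Ioi (fun t _ => ?_)
      simp
    rw [e1]
    exact integral_ofReal
  rw [hI] at h1
  have h2 : Complex.Gamma =ᶠ[nhds (1:ℂ)] Complex.GammaIntegral := by
    filter_upwards [(isOpen_lt continuous_const Complex.continuous_re).mem_nhds
      (by simp : (0:ℝ) < (1:ℂ).re)] with z hz
    exact Complex.Gamma_eq_integral hz
  have h3 : HasDerivAt Complex.Gamma
      ((∫ t in Set.Ioi (0:ℝ), Real.log t * Real.exp (-t) : ℝ) : ℂ) 1 :=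
    h1.congr_of_eventuallyEq h2
  have h4 : HasDerivAt (fun x : ℝ => Complex.Gamma x)
      ((∫ t in Set.Ioi (0:ℝ), Real.log t * Real.exp (-t) : ℝ) : ℂ) 1 := by
    exact_mod_cast h3.comp_ofReal
  have h5 : HasDerivAt (fun x : ℝ => ((Real.Gamma x : ℝ) : ℂ))
      ((-Real.eulerMascheroniConstant : ℝ) : ℂ) 1 :=
    Real.hasDerivAt_Gamma_one.ofReal_comp
  have h6 : (fun x : ℝ => Complex.Gamma x) = fun x : ℝ => ((Real.Gamma x : ℝ) : ℂ) := by
    funext x; exact Complex.Gamma_ofReal x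
  rw [h6] at h4
  have := h4.unique h5
  exact_mod_cast this

/-- The mean of the maximum extreme value (Gumbel) distribution with location `μ` and
dispersion `σ > 0` is `μ + ℰ σ`, where `ℰ` is the Euler–Mascheroni constant. -/
theorem gumbel_max_mean (μ σ : ℝ) (hσ : 0 < σ) :
    ∫ y : ℝ, y * ((1 / σ) * Real.exp (-((y - μ) / σ)) * Real.exp (-Real.exp (-((y - μ) / σ)))) =
      μ + Real.eulerMascheroniConstant * σ := by
  have hσ' : σ ≠ 0 := hσ.ne'
  set g : ℝ → ℝ := fun y =>
    y * ((1 / σ) * Real.exp (-((y - μ) / σ)) * Real.exp (-Real.exp (-((y - μ) / σ)))) with hg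
  have himg : (fun t : ℝ => μ - σ * Real.log t) '' (Set.Ioi 0) = Set.univ := by
    refine Set.eq_univ_of_forall fun x => ?_
    refine ⟨Real.exp ((μ - x) / σ), Real.exp_pos _, ?_⟩
    show μ - σ * Real.log (Real.exp ((μ - x) / σ)) = x
    rw [Real.log_exp]
    field_simp
    ring
  have hderiv : ∀ t ∈ Set.Ioi (0:ℝ),
      HasDerivWithinAt (fun t : ℝ => μ - σ * Real.log t) (-σ / t) (Set.Ioi 0) t := by
    intro t ht
    have := ((Real.hasDerivAt_log (ne_of_gt ht)).const_mul σ).const_sub μ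
    simpa [neg_div, div_eq_mul_inv] using this.hasDerivWithinAt
  have hinj : Set.InjOn (fun t : ℝ => μ - σ * Real.log t) (Set.Ioi 0) := by
    intro a ha b hb hab
    simp only at hab
    have hlog : Real.log a = Real.log b := by
      have h : σ * Real.log a = σ * Real.log b := by linarith
      exact mul_left_cancel₀ hσ' h
    exact Real.log_injOn_pos (by simpa using ha) (by simpa using hb) hlog
  have key := integral_image_eq_integral_abs_deriv_smul (f' := fun t => -σ / t)
    measurableSet_Ioi hderiv hinj g
  rw [himg] at key
  rw [show (∫ y : ℝ, g y) = ∫ y in Set.univ, g y by rw [setIntegral_univ], key]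
  have hcongr : ∀ t ∈ Set.Ioi (0:ℝ),
      |(-σ / t)| • g (μ - σ * Real.log t) = μ * Real.exp (-t) - σ * (Real.log t * Real.exp (-t)) := by
    intro t ht
    have ht0 : (0:ℝ) < t := ht
    have h1 : -((μ - σ * Real.log t - μ) / σ) = Real.log t := by field_simp; ring
    have h2 : |(-σ / t)| = σ / t := by
      rw [abs_div, abs_neg, abs_of_pos hσ, abs_of_pos ht0]
    rw [hg]
    simp only [smul_eq_mul, h1, h2, Real.exp_log ht0]
    field_simp
  rw [setIntegral_congr_fun measurableSet_Ioi hcongr]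
  have hi1 : IntegrableOn (fun t : ℝ => μ * Real.exp (-t)) (Set.Ioi 0) := by
    refine Integrable.const_mul ?_ μ
    simpa [neg_one_mul, IntegrableOn] using exp_neg_integrableOn_Ioi 0 one_pos
  have hi2 : IntegrableOn (fun t : ℝ => σ * (Real.log t * Real.exp (-t))) (Set.Ioi 0) :=
    gumbel_aux.1.const_mul σ
  rw [integral_sub hi1 hi2, integral_const_mul, integral_const_mul,
    integral_exp_neg_Ioi_zero, gumbel_aux.2]
  ring
end

section
/- For every real s > -1, ∫_ℝ z² · exp(-s·z) · exp(-z) exp(-exp(-z)) dz = Γ''(1+s), where Γ'' is the second derivative of the Gamma function. -/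
open MeasureTheory Real Set Filter Asymptotics Topology

namespace GumbelAux

/-- Growth bound at infinity. -/
lemma log_pow_exp_isBigO_atTop (n : ℕ) :
    (fun t : ℝ => Real.log t ^ n * Real.exp (-t)) =O[atTop]
      fun t => Real.exp (-(1 / 2 : ℝ) * t) := by
  have h2 : Tendsto (fun t : ℝ => t / 2) atTop atTop :=
    Filter.tendsto_id.atTop_div_const (by norm_num)
  have h := (Real.tendsto_exp_div_pow_atTop n).comp h2
  have hev := h.eventually_ge_atTop ((2 : ℝ) ^ n)
  rw [isBigO_iff]
  refine ⟨1, ?_⟩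
  filter_upwards [hev, Filter.eventually_ge_atTop (1 : ℝ)] with t hge h1
  have ht0 : (0 : ℝ) < t := lt_of_lt_of_le one_pos h1
  have hh : (2 : ℝ) ^ n ≤ Real.exp (t / 2) / (t / 2) ^ n := hge
  have hpow : t ^ n ≤ Real.exp (t / 2) := by
    have hp : (0 : ℝ) < (t / 2) ^ n := pow_pos (by linarith) n
    have h' : 2 ^ n * (t / 2) ^ n ≤ Real.exp (t / 2) := by
      rw [← le_div_iff₀ hp]; exact hh
    calc t ^ n = (2 * (t / 2)) ^ n := by ring_nf
      _ = 2 ^ n * (t / 2) ^ n := by rw [mul_pow]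
      _ ≤ Real.exp (t / 2) := h'
  have hlog : |Real.log t| ≤ t := by
    rw [abs_of_nonneg (Real.log_nonneg h1)]
    linarith [Real.log_le_sub_one_of_pos ht0]
  have hb : |Real.log t ^ n| ≤ Real.exp (t / 2) := by
    rw [abs_pow]
    exact le_trans (pow_le_pow_left₀ (abs_nonneg _) hlog n) hpow
  have hnorm : ‖Real.log t ^ n * Real.exp (-t)‖ ≤ Real.exp (t / 2) * Real.exp (-t) := by
    rw [Real.norm_eq_abs, abs_mul, abs_of_pos (Real.exp_pos _)]
    exact mul_le_mul_of_nonneg_right hb (Real.exp_pos _).le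
  calc ‖Real.log t ^ n * Real.exp (-t)‖ ≤ Real.exp (t / 2) * Real.exp (-t) := hnorm
    _ = Real.exp (-(1 / 2) * t) := by rw [← Real.exp_add]; ring_nf
    _ = 1 * ‖Real.exp (-(1 / 2) * t)‖ := by
        rw [one_mul, Real.norm_eq_abs, abs_of_pos (Real.exp_pos _)]

/-- Growth bound at zero. -/
lemma log_pow_exp_isBigO_nhds_zero (n : ℕ) {b : ℝ} (hb : 0 < b) :
    (fun t : ℝ => Real.log t ^ n * Real.exp (-t)) =O[𝓝[>] 0] (· ^ (-b)) := by
  have h1 : (fun x : ℝ => |Real.log x| ^ (n : ℝ)) =o[𝓝[>] 0] fun x => x ^ (-b) :=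
    isLittleO_abs_log_rpow_rpow_nhdsGT_zero n (neg_lt_zero.2 hb)
  refine IsBigO.trans ?_ h1.isBigO
  rw [isBigO_iff]
  refine ⟨1, ?_⟩
  filter_upwards [self_mem_nhdsWithin] with t (ht : 0 < t)
  have hexp : Real.exp (-t) ≤ 1 := Real.exp_le_one_iff.mpr (by linarith)
  rw [Real.norm_eq_abs, Real.norm_eq_abs, abs_mul, abs_pow,
    abs_of_nonneg (Real.rpow_nonneg (abs_nonneg _) _), Real.rpow_natCast, one_mul]
  have : |Real.log t| ^ n * |Real.exp (-t)| ≤ |Real.log t| ^ n * 1 := by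
    apply mul_le_mul_of_nonneg_left _ (pow_nonneg (abs_nonneg _) n)
    rw [abs_of_pos (Real.exp_pos _)]; exact hexp
  simpa using this

lemma ofReal_isBigO {g : ℝ → ℝ} {h : ℝ → ℝ} {l : Filter ℝ} (hg : g =O[l] h) :
    (fun t => ((g t : ℝ) : ℂ)) =O[l] h := by
  rw [← isBigO_norm_left]
  simpa [Complex.norm_real] using hg.norm_left

lemma contOn (n : ℕ) : ContinuousOn (fun t : ℝ => ((Real.log t ^ n * Real.exp (-t) : ℝ) : ℂ))
    (Ioi 0) := by
  apply Complex.continuous_ofReal.comp_continuousOn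
  apply ContinuousOn.mul
  · exact (Real.continuousOn_log.mono fun x hx => ne_of_gt hx).pow n
  · exact (Real.continuous_exp.comp continuous_neg).continuousOn

/-- Mellin transform of `log^n * exp(-t)` is differentiable with explicit derivative. -/
lemma mellin_step (n : ℕ) {z : ℂ} (hz : 0 < z.re) :
    HasDerivAt (mellin fun t : ℝ => ((Real.log t ^ n * Real.exp (-t) : ℝ) : ℂ))
      (mellin (fun t : ℝ => ((Real.log t ^ (n + 1) * Real.exp (-t) : ℝ) : ℂ)) z) z := by
  have key := mellin_hasDerivAt_of_isBigO_rpow (E := ℂ) (a := z.re + 1) (b := z.re / 2)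
    ((contOn n).locallyIntegrableOn measurableSet_Ioi)
    ((ofReal_isBigO (log_pow_exp_isBigO_atTop n)).trans
      (isLittleO_exp_neg_mul_rpow_atTop (by norm_num) _).isBigO)
    (by linarith)
    (ofReal_isBigO (log_pow_exp_isBigO_nhds_zero n (by linarith)))
    (by linarith)
  convert key.2 using 2
  · rfl
  · rfl
  funext t
  show ((Real.log t ^ (n + 1) * Real.exp (-t) : ℝ) : ℂ)
      = Real.log t • ((Real.log t ^ n * Real.exp (-t) : ℝ) : ℂ)
  rw [Complex.real_smul]
  push_cast
  ring

/-- `Γ''(x)` for `x > 0` as an integral. -/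
lemma deriv2_Gamma (x : ℝ) (hx : 0 < x) :
    deriv (deriv Real.Gamma) x
      = ∫ t in Ioi (0 : ℝ), t ^ (x - 1) * (Real.log t ^ 2 * Real.exp (-t)) := by
  set F1 : ℝ → ℂ := fun t => ((Real.log t ^ 1 * Real.exp (-t) : ℝ) : ℂ) with hF1
  set F2 : ℝ → ℂ := fun t => ((Real.log t ^ 2 * Real.exp (-t) : ℝ) : ℂ) with hF2
  -- first derivative of complex Gamma on positive reals
  have hGI : ∀ z : ℂ, 0 < z.re → HasDerivAt Complex.GammaIntegral (mellin F1 z) z := by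
    intro z hz
    have h := Complex.hasDerivAt_GammaIntegral hz
    convert h using 1
    rw [mellin]
    refine setIntegral_congr_fun measurableSet_Ioi fun t ht => ?_
    rw [smul_eq_mul, hF1]
    push_cast
    ring
  have hopen : IsOpen {z : ℂ | 0 < z.re} := isOpen_lt continuous_const Complex.continuous_re
  have hGamma : ∀ z : ℂ, 0 < z.re → HasDerivAt Complex.Gamma (mellin F1 z) z := by
    intro z hz
    refine (hGI z hz).congr_of_eventuallyEq ?_
    filter_upwards [hopen.mem_nhds hz] with w hw
    exact Complex.Gamma_eq_integral hw
  -- real first derivative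
  have hReal1 : ∀ y : ℝ, 0 < y → HasDerivAt Real.Gamma (mellin F1 y).re y := by
    intro y hy
    have : HasDerivAt Complex.Gamma (mellin F1 y) (y : ℂ) :=
      hGamma y (by simpa using hy)
    exact this.real_of_complex
  -- second derivative
  have hA : HasDerivAt (fun y : ℝ => (mellin F1 (y : ℂ)).re) (mellin F2 (x : ℂ)).re x := by
    have := mellin_step 1 (z := (x : ℂ)) (by simpa using hx)
    exact this.real_of_complex
  have hcongr : deriv Real.Gamma =ᶠ[nhds x] fun y : ℝ => (mellin F1 (y : ℂ)).re := by
    filter_upwards [isOpen_Ioi.mem_nhds (show x ∈ Ioi 0 from hx)] with y hy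
    exact (hReal1 y hy).deriv
  have : deriv (deriv Real.Gamma) x = (mellin F2 (x : ℂ)).re := by
    rw [hcongr.deriv_eq, hA.deriv]
  rw [this, mellin]
  have h3 : (∫ t in Ioi (0 : ℝ), (t : ℂ) ^ ((x : ℂ) - 1) • F2 t)
      = @RCLike.ofReal ℂ _ (∫ t in Ioi (0 : ℝ), t ^ (x - 1) * (Real.log t ^ 2 * Real.exp (-t))) := by
    rw [← integral_ofReal]
    refine setIntegral_congr_fun measurableSet_Ioi fun t ht => ?_
    show (t : ℂ) ^ ((x : ℂ) - 1) • F2 t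
        = ((t ^ (x - 1) * (Real.log t ^ 2 * Real.exp (-t)) : ℝ) : ℂ)
    rw [smul_eq_mul, hF2]
    rw [show ((x : ℂ) - 1) = ((x - 1 : ℝ) : ℂ) by push_cast; ring,
      ← Complex.ofReal_cpow (le_of_lt ht)]
    push_cast
    ring
  rw [h3]
  exact Complex.ofReal_re _

/-- Substitution `t = exp (-u)`. -/
lemma subst (F : ℝ → ℝ) :
    ∫ t in Ioi (0 : ℝ), F t = ∫ u : ℝ, Real.exp (-u) * F (Real.exp (-u)) := by
  have himg : (fun u : ℝ => Real.exp (-u)) '' univ = Ioi 0 := by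
    rw [image_univ]
    ext y
    simp only [mem_range, mem_Ioi]
    constructor
    · rintro ⟨u, rfl⟩; exact Real.exp_pos _
    · intro hy; exact ⟨-Real.log y, by rw [neg_neg, Real.exp_log hy]⟩
  have hderiv : ∀ u ∈ (univ : Set ℝ),
      HasDerivWithinAt (fun u : ℝ => Real.exp (-u)) (-Real.exp (-u)) univ u := by
    intro u _
    have h : HasDerivAt (fun u : ℝ => Real.exp (-u)) (Real.exp (-u) * (-1)) u :=
      (Real.hasDerivAt_exp (-u)).comp u ((hasDerivAt_id u).neg)
    have h' : HasDerivAt (fun u : ℝ => Real.exp (-u)) (-Real.exp (-u)) u := by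
      convert h using 1; ring
    exact h'.hasDerivWithinAt
  have hinj : InjOn (fun u : ℝ => Real.exp (-u)) univ :=
    fun a _ b _ h => by
      have := Real.exp_injective h
      linarith [neg_injective this]
  rw [← himg, integral_image_eq_integral_abs_deriv_smul MeasurableSet.univ hderiv hinj F,
    Measure.restrict_univ]
  refine integral_congr_ae (Filter.Eventually.of_forall fun u => ?_)
  show |(-Real.exp (-u))| • F (Real.exp (-u)) = Real.exp (-u) * F (Real.exp (-u))
  rw [abs_neg, abs_of_pos (Real.exp_pos _), smul_eq_mul]

end GumbelAux

/-- For `s > -1`, the integral of `z² exp(-s z)` against the standard Gumbel density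
`exp(-z) exp(-exp(-z))` equals `Γ''(1+s)`. -/
theorem standard_gumbel_sq_weighted_exp_moment (s : ℝ) (hs : -1 < s) :
    ∫ z : ℝ, z ^ 2 * Real.exp (-(s * z)) * (Real.exp (-z) * Real.exp (-Real.exp (-z))) =
      deriv (deriv Real.Gamma) (1 + s) := by
  have hx : (0 : ℝ) < 1 + s := by linarith
  rw [GumbelAux.deriv2_Gamma (1 + s) hx]
  rw [GumbelAux.subst fun t => t ^ (1 + s - 1) * (Real.log t ^ 2 * Real.exp (-t))]
  refine integral_congr_ae (Filter.Eventually.of_forall fun u => ?_)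
  have h1 : Real.log (Real.exp (-u)) = -u := Real.log_exp _
  have h2 : Real.exp (-u) ^ (1 + s - 1) = Real.exp (-(s * u)) := by
    rw [Real.rpow_def_of_pos (Real.exp_pos _), Real.log_exp]
    congr 1; ring
  show u ^ 2 * Real.exp (-(s * u)) * (Real.exp (-u) * Real.exp (-Real.exp (-u)))
      = Real.exp (-u) * (Real.exp (-u) ^ (1 + s - 1)
        * (Real.log (Real.exp (-u)) ^ 2 * Real.exp (-Real.exp (-u))))
  rw [h1, h2]; ring
end

section
/- For all μ ∈ ℝ and σ > 0, the score with respect to the dispersion parameter of the maximum extreme value distribution has zero mean: ∫_ℝ (1/σ)(-1 + z - z·exp(-z)) · (1/σ) exp(-z) exp(-exp(-z)) dy = 0, where z = (y-μ)/σ. -/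
open MeasureTheory Real Filter

private lemma g_deriv (z : ℝ) :
    HasDerivAt (fun z : ℝ => -(z * Real.exp (-z) * Real.exp (-Real.exp (-z))))
      ((-1 + z - z * Real.exp (-z)) * (Real.exp (-z) * Real.exp (-Real.exp (-z)))) z := by
  have h1 : HasDerivAt (fun z : ℝ => -z) (-1) z := (hasDerivAt_id z).neg
  have h2 : HasDerivAt (fun z : ℝ => Real.exp (-z)) (Real.exp (-z) * (-1)) z := h1.exp
  have h3 : HasDerivAt (fun z : ℝ => Real.exp (-Real.exp (-z)))
      (Real.exp (-Real.exp (-z)) * (-(Real.exp (-z) * (-1)))) z := h2.neg.exp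
  have := (((hasDerivAt_id z).mul h2).mul h3).neg
  refine this.congr_deriv ?_
  simp only [id_eq, Pi.mul_apply]
  ring

private lemma g_top :
    Tendsto (fun z : ℝ => -(z * Real.exp (-z) * Real.exp (-Real.exp (-z)))) atTop (nhds 0) := by
  have h1 : Tendsto (fun z : ℝ => z * Real.exp (-z)) atTop (nhds 0) := by
    simpa using tendsto_pow_mul_exp_neg_atTop_nhds_zero 1
  have h0 : Tendsto (fun z : ℝ => Real.exp (-z)) atTop (nhds 0) :=
    Real.tendsto_exp_atBot.comp tendsto_neg_atTop_atBot
  have h2 : Tendsto (fun z : ℝ => Real.exp (-Real.exp (-z))) atTop (nhds 1) := by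
    have := (Real.continuous_exp.tendsto 0).comp (neg_zero (G := ℝ) ▸ h0.neg)
    simpa [Function.comp_def] using this
  simpa using (h1.mul h2).neg

private lemma g_bot :
    Tendsto (fun z : ℝ => -(z * Real.exp (-z) * Real.exp (-Real.exp (-z)))) atBot (nhds 0) := by
  have hb : Tendsto (fun z : ℝ => Real.exp (-z)) atBot atTop :=
    Real.tendsto_exp_atTop.comp tendsto_neg_atBot_atTop
  have h2 : Tendsto (fun z : ℝ => (Real.exp (-z)) ^ 2 * Real.exp (-Real.exp (-z))) atBot (nhds 0) :=
    (tendsto_pow_mul_exp_neg_atTop_nhds_zero 2).comp hb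
  apply squeeze_zero_norm' ?_ h2
  filter_upwards [eventually_le_atBot (-1 : ℝ)] with z hz
  have hz1 : (1 : ℝ) ≤ -z := by linarith
  have hle : |z| ≤ Real.exp (-z) := by
    rw [abs_of_nonpos (by linarith)]
    nlinarith [Real.add_one_le_exp (-z)]
  have hpos : (0:ℝ) < Real.exp (-Real.exp (-z)) := Real.exp_pos _
  rw [Real.norm_eq_abs, abs_neg, abs_mul, abs_mul, abs_of_pos (Real.exp_pos _), abs_of_pos hpos]
  calc |z| * Real.exp (-z) * Real.exp (-Real.exp (-z))
      ≤ Real.exp (-z) * Real.exp (-z) * Real.exp (-Real.exp (-z)) := by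
        apply mul_le_mul_of_nonneg_right (mul_le_mul_of_nonneg_right hle (Real.exp_pos _).le) hpos.le
    _ = (Real.exp (-z)) ^ 2 * Real.exp (-Real.exp (-z)) := by ring

/-- The score with respect to the dispersion parameter of the maximum extreme value
distribution has zero mean. -/
theorem gumbel_max_dispersion_score_mean_zero (μ σ : ℝ) (hσ : 0 < σ) :
    ∫ y : ℝ,
        (1 / σ) * (-1 + (y - μ) / σ - ((y - μ) / σ) * Real.exp (-((y - μ) / σ))) *
          ((1 / σ) * Real.exp (-((y - μ) / σ)) * Real.exp (-Real.exp (-((y - μ) / σ)))) = 0 := by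
  set F : ℝ → ℝ := fun y =>
    (1 / σ) * -(((y - μ) / σ) * Real.exp (-((y - μ) / σ)) * Real.exp (-Real.exp (-((y - μ) / σ))))
    with hF
  set F' : ℝ → ℝ := fun y =>
    (1 / σ) * (-1 + (y - μ) / σ - ((y - μ) / σ) * Real.exp (-((y - μ) / σ))) *
      ((1 / σ) * Real.exp (-((y - μ) / σ)) * Real.exp (-Real.exp (-((y - μ) / σ)))) with hF'
  have hz : ∀ y : ℝ, HasDerivAt (fun y : ℝ => (y - μ) / σ) (1 / σ) y := fun y => by
    simpa using ((hasDerivAt_id y).sub_const μ).div_const σ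
  have hderiv : ∀ y, HasDerivAt F (F' y) y := by
    intro y
    have := ((g_deriv ((y - μ) / σ)).comp y (hz y)).const_mul (1 / σ)
    refine this.congr_deriv ?_
    simp only [hF']
    ring
  have hzt : Tendsto (fun y : ℝ => (y - μ) / σ) atTop atTop := by
    apply Tendsto.atTop_div_const hσ
    simpa [sub_eq_add_neg] using tendsto_atTop_add_const_right atTop (-μ) tendsto_id
  have hzb : Tendsto (fun y : ℝ => (y - μ) / σ) atBot atBot := by
    apply Tendsto.atBot_div_const hσ
    simpa [sub_eq_add_neg] using tendsto_atBot_add_const_right atBot (-μ) tendsto_id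
  have htop : Tendsto F atTop (nhds 0) := by
    have := (g_top.comp hzt).const_mul (1 / σ)
    simpa [hF, Function.comp] using this
  have hbot : Tendsto F atBot (nhds 0) := by
    have := (g_bot.comp hzb).const_mul (1 / σ)
    simpa [hF, Function.comp] using this
  by_cases hint : Integrable F'
  · have := MeasureTheory.integral_of_hasDerivAt_of_tendsto hderiv hint hbot htop
    simpa using this
  · exact integral_undef hint
end

section
/- For all μ ∈ ℝ and σ > 0, the cross Fisher information between the location and dispersion parameters of the maximum extreme value distribution equals (ℰ - 1)/σ²: ∫_ℝ (1/σ)(1 - exp(-z)) · (1/σ)(-1 + z - z·exp(-z)) · (1/σ) exp(-z) exp(-exp(-z)) dy = (ℰ - 1)/σ², where z = (y-μ)/σ and ℰ is the Euler–Mascheroni constant. -/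
open MeasureTheory Real

open Set Filter Asymptotics in
private lemma gumbel_aux_intA (n : ℕ) :
    IntegrableOn (fun t : ℝ => t ^ n * Real.exp (-t)) (Ioi 0) := by
  refine (Real.GammaIntegral_convergent (s := (n : ℝ) + 1) (by positivity)).congr_fun
    (fun t ht => ?_) measurableSet_Ioi
  rw [add_sub_cancel_right]; beta_reduce; rw [Real.rpow_natCast, mul_comm]

open Set in
private lemma gumbel_aux_valA (n : ℕ) :
    ∫ t in Ioi (0:ℝ), t ^ n * Real.exp (-t) = (Nat.factorial n : ℝ) := by
  have h := Real.Gamma_eq_integral (s := (n : ℝ) + 1) (by positivity)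
  rw [Real.Gamma_nat_eq_factorial] at h
  rw [h]
  refine setIntegral_congr_fun measurableSet_Ioi (fun t ht => ?_)
  rw [add_sub_cancel_right, Real.rpow_natCast, mul_comm]

open Set Filter Asymptotics in
private lemma gumbel_aux_cintB (n : ℕ) :
    IntegrableOn
      (fun t : ℝ => (t:ℂ) ^ (((n:ℂ) + 1) - 1) • (Real.log t • (Real.exp (-t) : ℂ)))
      (Ioi 0) := by
  have h := mellin_hasDerivAt_of_isBigO_rpow (E := ℂ) (f := fun t => (Real.exp (-t) : ℂ))
    (s := (n:ℂ) + 1) (a := ((n:ℂ) + 1).re + 1) (b := 0) ?_ ?_ (lt_add_one _) ?_ ?_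
  · exact h.1
  · refine (Continuous.continuousOn ?_).locallyIntegrableOn measurableSet_Ioi
    exact Complex.continuous_ofReal.comp (Real.continuous_exp.comp continuous_neg)
  · rw [← isBigO_norm_left]
    simp_rw [Complex.norm_real, isBigO_norm_left]
    simpa only [neg_one_mul] using (isLittleO_exp_neg_mul_rpow_atTop zero_lt_one _).isBigO
  · simp_rw [neg_zero, Real.rpow_zero]
    refine isBigO_const_of_tendsto (?_ : Tendsto _ _ (nhds (1 : ℂ))) one_ne_zero
    rw [(by simp : (1 : ℂ) = Real.exp (-0))]
    exact (Complex.continuous_ofReal.comp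
      (Real.continuous_exp.comp continuous_neg)).continuousWithinAt
  · simp
    positivity

open Set in
private lemma gumbel_aux_intB (n : ℕ) :
    IntegrableOn (fun t : ℝ => t ^ n * Real.log t * Real.exp (-t)) (Ioi 0) := by
  refine IntegrableOn.congr_fun ((gumbel_aux_cintB n).re) (fun t ht => ?_) measurableSet_Ioi
  have e1 : ((n:ℂ) + 1) - 1 = (n : ℂ) := by ring
  simp only [e1, Complex.cpow_natCast, smul_eq_mul, Complex.real_smul, ← Complex.ofReal_pow,
    ← Complex.ofReal_mul, RCLike.re_to_complex, Complex.ofReal_re]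
  ring

open Set in
private lemma gumbel_aux_valB (n : ℕ) :
    ∫ t in Ioi (0:ℝ), t ^ n * Real.log t * Real.exp (-t)
      = (Nat.factorial n : ℝ) * (-Real.eulerMascheroniConstant + (harmonic n : ℝ)) := by
  have h1 : HasDerivAt Complex.GammaIntegral
      (∫ t : ℝ in Ioi 0, (t:ℂ) ^ (((n:ℂ) + 1) - 1) * (Real.log t * Real.exp (-t)))
      ((n:ℂ) + 1) := by
    refine Complex.hasDerivAt_GammaIntegral ?_
    simp
    positivity
  have heq : Complex.Gamma =ᶠ[nhds ((n:ℂ) + 1)] Complex.GammaIntegral := by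
    have hopen : IsOpen {z : ℂ | 0 < z.re} := isOpen_lt continuous_const Complex.continuous_re
    have hmem : ((n:ℂ) + 1) ∈ {z : ℂ | 0 < z.re} := by
      simp only [Set.mem_setOf_eq]
      simp
      positivity
    filter_upwards [hopen.mem_nhds hmem] with z hz
    exact Complex.Gamma_eq_integral hz
  have h2 := h1.congr_of_eventuallyEq heq
  have h4 := h2.unique (Complex.hasDerivAt_Gamma_nat n)
  have h5 : (∫ t : ℝ in Ioi 0, (t:ℂ) ^ (((n:ℂ) + 1) - 1) * (Real.log t * Real.exp (-t)))
      = ((∫ t in Ioi (0:ℝ), t ^ n * Real.log t * Real.exp (-t) : ℝ) : ℂ) := by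
    have step : (∫ t : ℝ in Ioi 0, (t:ℂ) ^ (((n:ℂ) + 1) - 1) * (Real.log t * Real.exp (-t)))
        = ∫ t : ℝ in Ioi 0, ((t ^ n * Real.log t * Real.exp (-t) : ℝ) : ℂ) := by
      refine setIntegral_congr_fun measurableSet_Ioi (fun t ht => ?_)
      have e1 : ((n:ℂ) + 1) - 1 = (n : ℂ) := by ring
      rw [e1, Complex.cpow_natCast]
      push_cast
      ring
    rw [step]
    exact integral_ofReal
  rw [h5] at h4
  exact_mod_cast h4

open Set in
private lemma gumbel_aux_subst (h : ℝ → ℝ) :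
    ∫ t in Ioi (0:ℝ), h t = ∫ z : ℝ, Real.exp (-z) * h (Real.exp (-z)) := by
  have himg : (fun z : ℝ => Real.exp (-z)) '' univ = Ioi 0 := by
    rw [image_univ]
    ext x
    simp only [mem_range, mem_Ioi]
    constructor
    · rintro ⟨z, rfl⟩; exact Real.exp_pos _
    · intro hx; exact ⟨-Real.log x, by rw [neg_neg, Real.exp_log hx]⟩
  rw [← himg, integral_image_eq_integral_abs_deriv_smul MeasurableSet.univ
      (f' := fun z => -Real.exp (-z)) (fun x _ => ?_) (fun a _ b _ hab => ?_) h]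
  · rw [setIntegral_univ]
    refine integral_congr_ae (Filter.Eventually.of_forall (fun z => ?_))
    simp [abs_neg, Real.abs_exp]
  · have h1 : HasDerivWithinAt (fun z : ℝ => Real.exp (-z)) (Real.exp (-x) * -1) univ x :=
      HasDerivAt.hasDerivWithinAt (by
        simpa [Function.comp_def] using ((Real.hasDerivAt_exp (-x)).comp x (hasDerivAt_neg x)))
    simpa [mul_comm] using h1
  · exact neg_injective (Real.exp_injective hab)

private lemma gumbel_aux_main :
    ∫ z : ℝ, (1 - Real.exp (-z)) * (-1 + z - z * Real.exp (-z)) *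
        (Real.exp (-z) * Real.exp (-Real.exp (-z)))
      = Real.eulerMascheroniConstant - 1 := by
  have hfun : (fun z : ℝ => (1 - Real.exp (-z)) * (-1 + z - z * Real.exp (-z)) *
        (Real.exp (-z) * Real.exp (-Real.exp (-z))))
      = fun z : ℝ => Real.exp (-z) * ((fun t : ℝ =>
          (1 - t) * (-1 - Real.log t * (1 - t)) * Real.exp (-t)) (Real.exp (-z))) := by
    funext z
    simp only [Real.log_exp]
    ring
  have hsub := gumbel_aux_subst (fun t : ℝ => (1 - t) * (-1 - Real.log t * (1 - t)) * Real.exp (-t))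
  rw [hfun, ← hsub]
  have hcongr : ∀ t ∈ Set.Ioi (0:ℝ),
      (1 - t) * (-1 - Real.log t * (1 - t)) * Real.exp (-t)
        = (t ^ 1 * Real.exp (-t) - t ^ 0 * Real.exp (-t))
          + ((2 * (t ^ 1 * Real.log t * Real.exp (-t)) - t ^ 0 * Real.log t * Real.exp (-t))
            - t ^ 2 * Real.log t * Real.exp (-t)) := by
    intro t ht; ring
  rw [setIntegral_congr_fun measurableSet_Ioi hcongr]
  have hA0 := gumbel_aux_intA 0
  have hA1 := gumbel_aux_intA 1
  have hB0 := gumbel_aux_intB 0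
  have hB1 := gumbel_aux_intB 1
  have hB2 := gumbel_aux_intB 2
  have iA : Integrable (fun t : ℝ => t ^ 1 * Real.exp (-t) - t ^ 0 * Real.exp (-t))
      (volume.restrict (Set.Ioi 0)) := hA1.sub hA0
  have iB1 : Integrable (fun t : ℝ => 2 * (t ^ 1 * Real.log t * Real.exp (-t)))
      (volume.restrict (Set.Ioi 0)) := hB1.const_mul 2
  have iB2 : Integrable (fun t : ℝ => 2 * (t ^ 1 * Real.log t * Real.exp (-t))
      - t ^ 0 * Real.log t * Real.exp (-t)) (volume.restrict (Set.Ioi 0)) := iB1.sub hB0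
  have iB : Integrable (fun t : ℝ => (2 * (t ^ 1 * Real.log t * Real.exp (-t))
      - t ^ 0 * Real.log t * Real.exp (-t)) - t ^ 2 * Real.log t * Real.exp (-t))
      (volume.restrict (Set.Ioi 0)) := iB2.sub hB2
  rw [integral_add iA iB, integral_sub hA1 hA0, integral_sub iB2 hB2, integral_sub iB1 hB0,
    integral_const_mul, gumbel_aux_valA 0, gumbel_aux_valA 1, gumbel_aux_valB 0,
    gumbel_aux_valB 1, gumbel_aux_valB 2]
  have h2 : (harmonic 2 : ℝ) = 3 / 2 := by norm_num [harmonic_succ, harmonic_zero]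
  have h1 : (harmonic 1 : ℝ) = 1 := by norm_num [harmonic_succ, harmonic_zero]
  have h0 : (harmonic 0 : ℝ) = 0 := by norm_num [harmonic_zero]
  rw [h0, h1, h2]
  simp [Nat.factorial]
  ring

/-- The cross Fisher information between the location and dispersion parameters of the
maximum extreme value distribution equals `(ℰ - 1)/σ²`, with `ℰ` the Euler–Mascheroni
constant. -/
theorem gumbel_max_cross_fisher_information (μ σ : ℝ) (hσ : 0 < σ) :
    ∫ y : ℝ,
        (1 / σ) * (1 - Real.exp (-((y - μ) / σ))) *
          ((1 / σ) * (-1 + (y - μ) / σ - ((y - μ) / σ) * Real.exp (-((y - μ) / σ)))) *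
          ((1 / σ) * Real.exp (-((y - μ) / σ)) * Real.exp (-Real.exp (-((y - μ) / σ)))) =
      (Real.eulerMascheroniConstant - 1) / σ ^ 2 := by
  set G : ℝ → ℝ := fun z => (1 - Real.exp (-z)) * (-1 + z - z * Real.exp (-z)) *
    (Real.exp (-z) * Real.exp (-Real.exp (-z))) with hG
  have hpt : ∀ y : ℝ,
      (1 / σ) * (1 - Real.exp (-((y - μ) / σ))) *
          ((1 / σ) * (-1 + (y - μ) / σ - ((y - μ) / σ) * Real.exp (-((y - μ) / σ)))) *
          ((1 / σ) * Real.exp (-((y - μ) / σ)) * Real.exp (-Real.exp (-((y - μ) / σ))))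
        = (1 / σ) ^ 3 * (fun u => G (u / σ)) (y - μ) := by
    intro y; simp only [hG]; ring
  simp only [hpt]
  rw [integral_const_mul, integral_sub_right_eq_self (fun u => G (u / σ)) μ,
    Measure.integral_comp_div G σ, hG, gumbel_aux_main, smul_eq_mul, abs_of_pos hσ]
  field_simp
end

section
/- For all μ ∈ ℝ and σ > 0, the Fisher information for the dispersion parameter of the maximum extreme value distribution equals (1 + Γ''(2))/σ²: ∫_ℝ [(1/σ)(-1 + z - z·exp(-z))]² · (1/σ) exp(-z) exp(-exp(-z)) dy = (1 + Γ''(2))/σ², where z = (y-μ)/σ and Γ'' is the second derivative of the Gamma function. -/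
open MeasureTheory Real Set Filter


lemma aux_log_bound {t : ℝ} (ht : 0 < t) (ht1 : t ≤ 1) : |Real.log t| ≤ 4 * t ^ (-(1/4 : ℝ)) := by
  have h1 : |Real.log t| = Real.log t⁻¹ := by
    rw [Real.log_inv, abs_of_nonpos (Real.log_nonpos ht.le ht1)]
  rw [h1]
  have h2 := Real.log_le_rpow_div (inv_nonneg.mpr ht.le) (by norm_num : (0:ℝ) < 1/4)
  calc Real.log t⁻¹ ≤ t⁻¹ ^ ((1/4:ℝ)) / (1/4) := h2
    _ = 4 * t ^ (-(1/4:ℝ)) := by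
        rw [Real.inv_rpow ht.le, ← Real.rpow_neg ht.le]; ring

lemma aux_int (k j : ℕ) (hj : j ≤ 2) :
    IntegrableOn (fun t : ℝ => t ^ k * Real.log t ^ j * Real.exp (-t)) (Ioi 0) := by
  have h1 : IntegrableOn (fun t : ℝ => Real.exp (-t) * t ^ ((k : ℝ) + 1/2 - 1)) (Ioi 0) :=
    Real.GammaIntegral_convergent (by positivity)
  have h2 : IntegrableOn (fun t : ℝ => Real.exp (-t) * t ^ (((k:ℝ) + (j:ℝ) + 1) - 1)) (Ioi 0) :=
    Real.GammaIntegral_convergent (by positivity)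
  refine Integrable.mono' ((h1.const_mul 16).add h2) ?_ ?_
  · refine (ContinuousOn.mul (ContinuousOn.mul ?_ ?_) ?_).aestronglyMeasurable measurableSet_Ioi
    · exact (continuous_pow k).continuousOn
    · refine (Real.continuousOn_log.mono ?_).pow j
      intro x hx; simpa using (ne_of_gt hx)
    · exact (Real.continuous_exp.comp continuous_neg).continuousOn
  · filter_upwards [ae_restrict_mem measurableSet_Ioi] with t ht
    have ht0 : (0:ℝ) < t := ht
    have habs : ‖t ^ k * Real.log t ^ j * Real.exp (-t)‖
        = t ^ k * |Real.log t| ^ j * Real.exp (-t) := by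
      rw [norm_mul, norm_mul, norm_pow, norm_pow, Real.norm_eq_abs, Real.norm_eq_abs,
        Real.norm_eq_abs, abs_of_pos ht0, abs_of_pos (Real.exp_pos _)]
    rw [habs]
    rcases le_total t 1 with h|h
    · have hl : |Real.log t| ^ j ≤ 16 * t ^ (-(1/2:ℝ)) := by
        calc |Real.log t| ^ j ≤ (4 * t ^ (-(1/4:ℝ))) ^ j := by
              exact pow_le_pow_left₀ (abs_nonneg _) (aux_log_bound ht0 h) j
          _ = 4 ^ j * (t ^ (-(1/4:ℝ))) ^ j := by rw [mul_pow]
          _ = 4 ^ j * t ^ (-(1/4:ℝ) * j) := by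
              rw [← Real.rpow_natCast (t ^ (-(1/4:ℝ))) j, ← Real.rpow_mul ht0.le]
          _ ≤ 16 * t ^ (-(1/2:ℝ)) := by
              have h4 : (4:ℝ) ^ j ≤ 16 := by
                calc (4:ℝ)^j ≤ 4^2 := by
                      exact pow_le_pow_right₀ (by norm_num) hj
                  _ = 16 := by norm_num
              have he : t ^ (-(1/4:ℝ) * j) ≤ t ^ (-(1/2:ℝ)) := by
                apply Real.rpow_le_rpow_of_exponent_ge ht0 h
                have : (j:ℝ) ≤ 2 := by exact_mod_cast hj
                nlinarith
              have hp : (0:ℝ) ≤ t ^ (-(1/4:ℝ) * j) := Real.rpow_nonneg ht0.le _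
              nlinarith [Real.rpow_nonneg ht0.le (-(1/2:ℝ))]
      have step : t ^ k * |Real.log t| ^ j * Real.exp (-t)
          ≤ t ^ k * (16 * t ^ (-(1/2:ℝ))) * Real.exp (-t) :=
        mul_le_mul_of_nonneg_right
          (mul_le_mul_of_nonneg_left hl (pow_nonneg ht0.le k)) (Real.exp_pos _).le
      have hkk : t ^ k * (16 * t ^ (-(1/2:ℝ))) * Real.exp (-t)
          = 16 * (Real.exp (-t) * t ^ ((k:ℝ) + 1/2 - 1)) := by
        rw [← Real.rpow_natCast t k, show ((k:ℝ) + 1/2 - 1) = (k:ℝ) + -(1/2) by ring,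
          Real.rpow_add ht0]
        ring
      simp only [Pi.add_apply]
      have hpos : (0:ℝ) ≤ Real.exp (-t) * t ^ (((k:ℝ) + (j:ℝ) + 1) - 1) := by positivity
      linarith [step.trans_eq hkk]
    · have hl : |Real.log t| ^ j ≤ t ^ j := by
        apply pow_le_pow_left₀ (abs_nonneg _)
        rw [abs_of_nonneg (Real.log_nonneg h)]
        linarith [Real.log_le_sub_one_of_pos (lt_of_lt_of_le one_pos h)]
      have step : t ^ k * |Real.log t| ^ j * Real.exp (-t)
          ≤ t ^ k * t ^ j * Real.exp (-t) :=
        mul_le_mul_of_nonneg_right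
          (mul_le_mul_of_nonneg_left hl (pow_nonneg ht0.le k)) (Real.exp_pos _).le
      have hkk : t ^ k * t ^ j * Real.exp (-t)
          = Real.exp (-t) * t ^ (((k:ℝ) + (j:ℝ) + 1) - 1) := by
        rw [show (((k:ℝ) + (j:ℝ) + 1) - 1) = (k:ℝ) + (j:ℝ) by ring, Real.rpow_add ht0,
          Real.rpow_natCast, Real.rpow_natCast]
        ring
      simp only [Pi.add_apply]
      have hpos : (0:ℝ) ≤ 16 * (Real.exp (-t) * t ^ ((k:ℝ) + 1/2 - 1)) := by positivity
      linarith [step.trans_eq hkk]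


noncomputable def gumbelF : ℝ → ℂ := fun t => ((Real.log t * Real.exp (-t) : ℝ) : ℂ)

noncomputable def gumbelG1 : ℝ → ℝ :=
  fun s => ∫ t in Ioi (0:ℝ), t ^ (s - 1) * (Real.log t * Real.exp (-t))

lemma gumbel_mellinF (x : ℝ) : mellin gumbelF (x : ℂ) = ((gumbelG1 x : ℝ) : ℂ) := by
  have h1 : mellin gumbelF (x:ℂ)
      = ∫ t in Ioi (0:ℝ), ((t ^ (x - 1) * (Real.log t * Real.exp (-t)) : ℝ) : ℂ) := by
    rw [mellin]
    refine setIntegral_congr_fun measurableSet_Ioi fun t ht => ?_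
    have ht0 : (0:ℝ) < t := ht
    simp only [gumbelF, smul_eq_mul]
    push_cast [Complex.ofReal_cpow ht0.le]
    ring
  rw [h1, gumbelG1]
  exact integral_ofReal

lemma gumbel_hasDerivAt_Gamma {s : ℝ} (hs : 0 < s) :
    HasDerivAt Real.Gamma (gumbelG1 s) s := by
  have hs' : 0 < (s:ℂ).re := by simpa using hs
  have hC : HasDerivAt Complex.GammaIntegral
      (∫ t : ℝ in Ioi 0, (t:ℂ) ^ ((s:ℂ) - 1) * (Real.log t * Real.exp (-t))) s :=
    Complex.hasDerivAt_GammaIntegral hs'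
  have hmem : {z : ℂ | 0 < z.re} ∈ nhds (s:ℂ) :=
    (Complex.continuous_re.isOpen_preimage _ isOpen_Ioi).mem_nhds hs'
  have hev : Complex.Gamma =ᶠ[nhds (s:ℂ)] Complex.GammaIntegral := by
    filter_upwards [hmem] with z hz using Complex.Gamma_eq_integral hz
  have hC2 : HasDerivAt Complex.Gamma
      (∫ t : ℝ in Ioi 0, (t:ℂ) ^ ((s:ℂ) - 1) * (Real.log t * Real.exp (-t))) s :=
    hC.congr_of_eventuallyEq hev
  have hkey : (∫ t : ℝ in Ioi 0, (t:ℂ) ^ ((s:ℂ) - 1) * (Real.log t * Real.exp (-t)))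
      = mellin gumbelF (s : ℂ) := by
    rw [mellin]
    refine setIntegral_congr_fun measurableSet_Ioi fun t ht => ?_
    simp only [gumbelF, smul_eq_mul]
    push_cast
    ring
  rw [hkey, gumbel_mellinF] at hC2
  have hR := hC2.real_of_complex
  simp only [Complex.ofReal_re] at hR
  have hfun : (fun x : ℝ => (Complex.Gamma (x:ℂ)).re) = Real.Gamma := by
    funext x; rw [Complex.Gamma_ofReal, Complex.ofReal_re]
  rwa [hfun] at hR

lemma gumbel_top_bigO : gumbelF =O[atTop] fun t : ℝ => t ^ (-(4:ℝ)) := by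
  rw [Asymptotics.isBigO_iff]
  refine ⟨1, ?_⟩
  have h5 := (tendsto_pow_mul_exp_neg_atTop_nhds_zero 5).eventually_lt_const one_pos
  filter_upwards [h5, eventually_ge_atTop (1:ℝ)] with t h1 h2
  have ht0 : (0:ℝ) < t := lt_of_lt_of_le one_pos h2
  have hnorm : ‖gumbelF t‖ = |Real.log t| * Real.exp (-t) := by
    rw [gumbelF, Complex.norm_real, Real.norm_eq_abs, abs_mul, abs_of_pos (Real.exp_pos _)]
  have habs : |Real.log t| ≤ t := by
    rw [abs_of_nonneg (Real.log_nonneg h2)]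
    linarith [Real.log_le_sub_one_of_pos ht0]
  have hexp : Real.exp (-t) ≤ (t^5)⁻¹ := by
    rw [← one_div, le_div_iff₀ (by positivity)]
    nlinarith
  have hval : ‖t ^ (-(4:ℝ))‖ = (t^4)⁻¹ := by
    rw [Real.norm_eq_abs, abs_of_pos (Real.rpow_pos_of_pos ht0 _), Real.rpow_neg ht0.le,
      show (4:ℝ) = ((4:ℕ):ℝ) by norm_num, Real.rpow_natCast]
  rw [hnorm, hval, one_mul]
  calc |Real.log t| * Real.exp (-t) ≤ t * (t^5)⁻¹ :=
        mul_le_mul habs hexp (Real.exp_pos _).le ht0.le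
    _ = (t^4)⁻¹ := by field_simp

lemma gumbel_bot_bigO : gumbelF =O[nhdsWithin (0:ℝ) (Ioi 0)] fun t : ℝ => t ^ (-(1/2:ℝ)) := by
  rw [Asymptotics.isBigO_iff]
  refine ⟨4, ?_⟩
  filter_upwards [Ioo_mem_nhdsGT zero_lt_one] with t ht
  have ht0 : (0:ℝ) < t := ht.1
  have ht1 : t ≤ 1 := ht.2.le
  have hnorm : ‖gumbelF t‖ = |Real.log t| * Real.exp (-t) := by
    rw [gumbelF, Complex.norm_real, Real.norm_eq_abs, abs_mul, abs_of_pos (Real.exp_pos _)]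
  have hval : ‖t ^ (-(1/2:ℝ))‖ = t ^ (-(1/2:ℝ)) := by
    rw [Real.norm_eq_abs, abs_of_pos (Real.rpow_pos_of_pos ht0 _)]
  rw [hnorm, hval]
  have h1 : |Real.log t| * Real.exp (-t) ≤ |Real.log t| := by
    have := Real.exp_le_one_iff.mpr (neg_nonpos.mpr ht0.le)
    nlinarith [abs_nonneg (Real.log t)]
  have h2 : |Real.log t| ≤ 4 * t ^ (-(1/4:ℝ)) := aux_log_bound ht0 ht1
  have h3 : t ^ (-(1/4:ℝ)) ≤ t ^ (-(1/2:ℝ)) :=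
    Real.rpow_le_rpow_of_exponent_ge ht0 ht1 (by norm_num)
  linarith

lemma gumbel_locInt : LocallyIntegrableOn gumbelF (Ioi (0:ℝ)) volume := by
  apply ContinuousOn.locallyIntegrableOn _ measurableSet_Ioi
  apply Complex.continuous_ofReal.comp_continuousOn
  apply ContinuousOn.mul
  · exact Real.continuousOn_log.mono (fun x hx => by simpa using ne_of_gt hx)
  · exact (Real.continuous_exp.comp continuous_neg).continuousOn

lemma gumbel_hasDerivAt_G1 :
    HasDerivAt gumbelG1 (∫ t in Ioi (0:ℝ), t * (Real.log t ^ 2 * Real.exp (-t))) 2 := by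
  have hm := (mellin_hasDerivAt_of_isBigO_rpow (E := ℂ) gumbel_locInt gumbel_top_bigO
    (by norm_num : (2:ℂ).re < 4) gumbel_bot_bigO (by norm_num : (1/2:ℝ) < (2:ℂ).re)).2
  have hval : mellin (fun t => Real.log t • gumbelF t) 2
      = ((∫ t in Ioi (0:ℝ), t * (Real.log t ^ 2 * Real.exp (-t)) : ℝ) : ℂ) := by
    have h1 : mellin (fun t => Real.log t • gumbelF t) 2
        = ∫ t in Ioi (0:ℝ), ((t * (Real.log t ^ 2 * Real.exp (-t)) : ℝ) : ℂ) := by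
      rw [mellin]
      refine setIntegral_congr_fun measurableSet_Ioi fun t ht => ?_
      have ht0 : (0:ℝ) < t := ht
      simp only [gumbelF, Complex.real_smul, smul_eq_mul]
      rw [show (2:ℂ) - 1 = 1 by ring, Complex.cpow_one]
      push_cast
      ring
    rw [h1]
    exact integral_ofReal
  rw [hval, show (2:ℂ) = ((2:ℝ):ℂ) by norm_num] at hm
  have hR := hm.real_of_complex
  have hfun : (fun x : ℝ => (mellin gumbelF (x:ℂ)).re) = gumbelG1 := by
    funext x; rw [gumbel_mellinF, Complex.ofReal_re]
  rw [hfun, Complex.ofReal_re] at hR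
  exact hR

lemma gumbel_deriv2_Gamma :
    deriv (deriv Real.Gamma) 2 = ∫ t in Ioi (0:ℝ), t * (Real.log t ^ 2 * Real.exp (-t)) := by
  have h1 : deriv Real.Gamma =ᶠ[nhds (2:ℝ)] gumbelG1 := by
    filter_upwards [Ioi_mem_nhds (by norm_num : (0:ℝ) < 2)] with s hs
    exact (gumbel_hasDerivAt_Gamma hs).deriv
  rw [h1.deriv_eq, gumbel_hasDerivAt_G1.deriv]

noncomputable def gumbelPhi : ℝ → ℝ := fun t => (t^2 - t) * Real.log t ^ 2 * Real.exp (-t)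

noncomputable def gumbelPhi' : ℝ → ℝ := fun t =>
  ((2*t - 1) - (t^2 - t)) * Real.log t ^ 2 * Real.exp (-t)
    + 2 * (t - 1) * Real.log t * Real.exp (-t)

lemma gumbel_hasDerivAt_phi {t : ℝ} (ht : 0 < t) : HasDerivAt gumbelPhi (gumbelPhi' t) t := by
  have h1 : HasDerivAt (fun t : ℝ => t^2 - t) (2*t - 1) t := by
    simpa using ((hasDerivAt_pow 2 t).fun_sub (hasDerivAt_id t))
  have h2 : HasDerivAt (fun t : ℝ => Real.log t ^ 2) (2 * Real.log t * t⁻¹) t := by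
    simpa using (Real.hasDerivAt_log (ne_of_gt ht)).fun_pow 2
  have h3 : HasDerivAt (fun t : ℝ => Real.exp (-t)) (-Real.exp (-t)) t := by
    simpa [Function.comp_def] using (Real.hasDerivAt_exp (-t)).comp t (hasDerivAt_neg t)
  have h : HasDerivAt gumbelPhi _ t := (h1.fun_mul h2).fun_mul h3
  convert h using 1
  simp only [gumbelPhi']
  field_simp
  ring

lemma gumbel_phi_zero : Tendsto gumbelPhi (nhdsWithin 0 (Ioi 0)) (nhds 0) := by
  have h1 : Tendsto (fun t : ℝ => Real.log t * t ^ (1/2:ℝ)) (nhdsWithin 0 (Ioi 0)) (nhds 0) :=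
    tendsto_log_mul_rpow_nhdsGT_zero (by norm_num)
  have ha : Tendsto (fun t : ℝ => t - 1) (nhdsWithin 0 (Ioi 0)) (nhds (-1)) := by
    have h : Tendsto (fun t : ℝ => t - 1) (nhds 0) (nhds (0 - 1)) :=
      (continuous_id.sub continuous_const).tendsto 0
    simpa using h.mono_left nhdsWithin_le_nhds
  have hb : Tendsto (fun t : ℝ => (Real.log t * t ^ (1/2:ℝ))^2) (nhdsWithin 0 (Ioi 0))
      (nhds 0) := by
    have := h1.pow 2
    simpa using this
  have hc : Tendsto (fun t : ℝ => Real.exp (-t)) (nhdsWithin 0 (Ioi 0)) (nhds 1) := by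
    have h : Tendsto (fun t : ℝ => Real.exp (-t)) (nhds 0) (nhds (Real.exp (-0))) :=
      (Real.continuous_exp.comp continuous_neg).tendsto 0
    simpa using h.mono_left nhdsWithin_le_nhds
  have h2 : Tendsto (fun t : ℝ => (t - 1) * (Real.log t * t ^ (1/2:ℝ))^2 * Real.exp (-t))
      (nhdsWithin 0 (Ioi 0)) (nhds 0) := by
    have := (ha.mul hb).mul hc
    simpa using this
  refine h2.congr' ?_
  filter_upwards [self_mem_nhdsWithin] with t (ht : (0:ℝ) < t)
  have hsq : (t ^ (1/2:ℝ))^2 = t := by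
    rw [← Real.rpow_natCast (t ^ (1/2:ℝ)) 2, ← Real.rpow_mul ht.le]
    norm_num
  simp only [gumbelPhi]
  rw [mul_pow, hsq]
  ring

lemma gumbel_phi_cwa : ContinuousWithinAt gumbelPhi (Ici (0:ℝ)) 0 := by
  rw [← Set.Ioi_insert, continuousWithinAt_insert_self, ContinuousWithinAt,
    show gumbelPhi 0 = 0 by simp [gumbelPhi]]
  exact gumbel_phi_zero

lemma gumbel_phi_top : Tendsto gumbelPhi atTop (nhds 0) := by
  have hg := tendsto_pow_mul_exp_neg_atTop_nhds_zero 4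
  apply squeeze_zero' ?_ ?_ hg
  · filter_upwards [eventually_ge_atTop (1:ℝ)] with t ht
    have h1 : (0:ℝ) ≤ t^2 - t := by nlinarith
    have := sq_nonneg (Real.log t)
    have := (Real.exp_pos (-t)).le
    simp only [gumbelPhi]
    positivity
  · filter_upwards [eventually_ge_atTop (1:ℝ)] with t ht
    have ht0 : (0:ℝ) < t := lt_of_lt_of_le one_pos ht
    have hlog0 : 0 ≤ Real.log t := Real.log_nonneg ht
    have hlog : Real.log t ≤ t := by linarith [Real.log_le_sub_one_of_pos ht0]
    have hl2 : Real.log t ^ 2 ≤ t ^ 2 := by nlinarith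
    have hq : t^2 - t ≤ t^2 := by nlinarith
    have h1 : (t^2 - t) * Real.log t ^ 2 ≤ t^2 * t^2 :=
      mul_le_mul hq hl2 (sq_nonneg _) (by positivity)
    calc gumbelPhi t = ((t^2 - t) * Real.log t ^ 2) * Real.exp (-t) := rfl
      _ ≤ (t^2 * t^2) * Real.exp (-t) := mul_le_mul_of_nonneg_right h1 (Real.exp_pos _).le
      _ = t^4 * Real.exp (-t) := by ring

lemma gumbel_phi'_integrable : IntegrableOn gumbelPhi' (Ioi (0:ℝ)) := by
  have hcombo : gumbelPhi' = fun t : ℝ =>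
      (-1) * (t^2 * Real.log t ^ 2 * Real.exp (-t)) + 3 * (t^1 * Real.log t ^ 2 * Real.exp (-t))
      + ((-1) * (t^0 * Real.log t ^ 2 * Real.exp (-t)) + (2 * (t^1 * Real.log t ^ 1 * Real.exp (-t))
      + (-2) * (t^0 * Real.log t ^ 1 * Real.exp (-t)))) := by
    funext t; simp only [gumbelPhi', pow_one, pow_zero]; ring
  rw [hcombo]
  exact (((aux_int 2 2 le_rfl).const_mul (-1)).add ((aux_int 1 2 le_rfl).const_mul 3)).add
    (((aux_int 0 2 le_rfl).const_mul (-1)).add (((aux_int 1 1 (by norm_num)).const_mul 2).add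
      ((aux_int 0 1 (by norm_num)).const_mul (-2))))

lemma gumbel_phi'_integral : ∫ t in Ioi (0:ℝ), gumbelPhi' t = 0 := by
  have h := integral_Ioi_of_hasDerivAt_of_tendsto gumbel_phi_cwa
    (fun t ht => gumbel_hasDerivAt_phi ht) gumbel_phi'_integrable gumbel_phi_top
  simpa [gumbelPhi] using h

lemma gumbel_H_integral :
    ∫ t in Ioi (0:ℝ), (-1 - Real.log t + t * Real.log t)^2 * Real.exp (-t)
      = 1 + deriv (deriv Real.Gamma) 2 := by
  have hsplit : ∀ t : ℝ, (-1 - Real.log t + t * Real.log t)^2 * Real.exp (-t)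
      = t * (Real.log t ^ 2 * Real.exp (-t)) + Real.exp (-t) + (-1) * gumbelPhi' t := by
    intro t; simp only [gumbelPhi']; ring
  have hint1 : IntegrableOn (fun t : ℝ => t * (Real.log t ^ 2 * Real.exp (-t))) (Ioi 0) :=
    (aux_int 1 2 le_rfl).congr_fun (fun t _ => by ring) measurableSet_Ioi
  have hint2 : IntegrableOn (fun t : ℝ => Real.exp (-t)) (Ioi 0) := by
    have h := Real.GammaIntegral_convergent (by norm_num : (0:ℝ) < 1)
    simp only [sub_self, Real.rpow_zero, mul_one] at h
    exact h
  have hint3 : IntegrableOn (fun t : ℝ => (-1:ℝ) * gumbelPhi' t) (Ioi 0) :=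
    gumbel_phi'_integrable.const_mul (-1)
  calc ∫ t in Ioi (0:ℝ), (-1 - Real.log t + t * Real.log t)^2 * Real.exp (-t)
      = ∫ t in Ioi (0:ℝ), (t * (Real.log t ^ 2 * Real.exp (-t)) + Real.exp (-t)
          + (-1) * gumbelPhi' t) :=
        setIntegral_congr_fun measurableSet_Ioi (fun t _ => hsplit t)
    _ = (∫ t in Ioi (0:ℝ), t * (Real.log t ^ 2 * Real.exp (-t)))
        + (∫ t in Ioi (0:ℝ), Real.exp (-t)) + ∫ t in Ioi (0:ℝ), (-1) * gumbelPhi' t := by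
        have hint12 : IntegrableOn (fun t : ℝ => t * (Real.log t ^ 2 * Real.exp (-t))
            + Real.exp (-t)) (Ioi 0) := hint1.add hint2
        rw [integral_add hint12 hint3, integral_add hint1 hint2]
    _ = 1 + deriv (deriv Real.Gamma) 2 := by
        rw [gumbel_deriv2_Gamma, integral_exp_neg_Ioi_zero, integral_const_mul,
          gumbel_phi'_integral]
        ring

lemma gumbel_subst :
    (∫ z : ℝ, (-1 + z - z * Real.exp (-z))^2 * (Real.exp (-z) * Real.exp (-Real.exp (-z))))
      = ∫ t in Ioi (0:ℝ), (-1 - Real.log t + t * Real.log t)^2 * Real.exp (-t) := by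
  have himg : (fun z : ℝ => Real.exp (-z)) '' Set.univ = Ioi 0 := by
    rw [Set.image_univ, show (fun z : ℝ => Real.exp (-z)) = Real.exp ∘ Neg.neg from rfl,
      Set.range_comp, neg_surjective.range_eq, Set.image_univ, Real.range_exp]
  have hinj : Set.InjOn (fun z : ℝ => Real.exp (-z)) Set.univ :=
    (Real.exp_injective.comp neg_injective).injOn
  have hd : ∀ z : ℝ, HasDerivAt (fun z : ℝ => Real.exp (-z)) (Real.exp (-z) * (-1)) z := by
    intro z
    exact (Real.hasDerivAt_exp (-z)).comp z (hasDerivAt_neg z)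
  have h := integral_image_eq_integral_abs_deriv_smul MeasurableSet.univ
    (fun z _ => (hd z).hasDerivWithinAt)
    hinj (fun t => (-1 - Real.log t + t * Real.log t)^2 * Real.exp (-t))
  rw [himg, Measure.restrict_univ] at h
  rw [h]
  refine integral_congr_ae (Eventually.of_forall fun z => ?_)
  simp only [smul_eq_mul, Real.log_exp, abs_mul, abs_neg, abs_one, mul_one,
    abs_of_pos (Real.exp_pos (-z))]
  ring

/-- The Fisher information for the dispersion parameter of the maximum extreme value
distribution equals `(1 + Γ''(2))/σ²`, with `Γ''` the second derivative of the Gamma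
function. -/
theorem gumbel_max_dispersion_fisher_information (μ σ : ℝ) (hσ : 0 < σ) :
    ∫ y : ℝ,
        ((1 / σ) * (-1 + (y - μ) / σ - ((y - μ) / σ) * Real.exp (-((y - μ) / σ)))) ^ 2 *
          ((1 / σ) * Real.exp (-((y - μ) / σ)) * Real.exp (-Real.exp (-((y - μ) / σ)))) =
      (1 + deriv (deriv Real.Gamma) 2) / σ ^ 2 := by
  have hne : σ ≠ 0 := hσ.ne'
  set Φ : ℝ → ℝ := fun z => (1/σ)^3 *
    ((-1 + z - z * Real.exp (-z))^2 * (Real.exp (-z) * Real.exp (-Real.exp (-z)))) with hΦ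
  have h1 : (fun y : ℝ =>
        ((1 / σ) * (-1 + (y - μ) / σ - ((y - μ) / σ) * Real.exp (-((y - μ) / σ)))) ^ 2 *
          ((1 / σ) * Real.exp (-((y - μ) / σ)) * Real.exp (-Real.exp (-((y - μ) / σ)))))
      = fun y : ℝ => Φ ((y - μ) / σ) := by
    funext y; rw [hΦ]; ring
  rw [h1]
  have h2 : ∫ y : ℝ, Φ ((y - μ) / σ) = ∫ y : ℝ, Φ (y / σ) :=
    integral_sub_right_eq_self (μ := volume) (fun y => Φ (y / σ)) μ
  have h3 : ∫ y : ℝ, Φ (y / σ) = |σ| • ∫ z : ℝ, Φ z := Measure.integral_comp_div Φ σ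
  rw [h2, h3, hΦ]
  rw [integral_const_mul, gumbel_subst, gumbel_H_integral, abs_of_pos hσ, smul_eq_mul]
  field_simp
end

section
/- Let Y have the maximum extreme value distribution with location μ₁ ∈ ℝ and dispersion σ₁ > 0, and let μ₂ ∈ ℝ and σ₂ > 0. Then ∫_ℝ (1 - exp(-(y-μ₁)/σ₁)) · (1 - exp(-(y-μ₂)/σ₂)) · (1/σ₁) exp(-(y-μ₁)/σ₁) exp(-exp(-(y-μ₁)/σ₁)) dy = (σ₁/σ₂) · Γ(1 + σ₁/σ₂) · exp(-(μ₁-μ₂)/σ₂), where Γ is the Gamma function. -/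
open MeasureTheory Real Set

private lemma gumbel_aux_change (μ₁ μ₂ σ₁ σ₂ : ℝ) (hσ₁ : 0 < σ₁) (hσ₂ : 0 < σ₂) :
    ∫ y : ℝ,
        (1 - Real.exp (-((y - μ₁) / σ₁))) * (1 - Real.exp (-((y - μ₂) / σ₂))) *
          ((1 / σ₁) * Real.exp (-((y - μ₁) / σ₁)) * Real.exp (-Real.exp (-((y - μ₁) / σ₁)))) =
      ∫ t in Ioi (0:ℝ),
        (1 - t) * (1 - Real.exp (-((μ₁ - μ₂) / σ₂)) * t ^ (σ₁ / σ₂)) * Real.exp (-t) := by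
  set F : ℝ → ℝ := fun y =>
    (1 - Real.exp (-((y - μ₁) / σ₁))) * (1 - Real.exp (-((y - μ₂) / σ₂))) *
      ((1 / σ₁) * Real.exp (-((y - μ₁) / σ₁)) * Real.exp (-Real.exp (-((y - μ₁) / σ₁)))) with hF
  set f : ℝ → ℝ := fun t => μ₁ - σ₁ * Real.log t with hf
  have himg : f '' Ioi (0:ℝ) = univ := by
    apply eq_univ_of_forall
    intro y
    refine ⟨Real.exp ((μ₁ - y) / σ₁), Real.exp_pos _, ?_⟩
    simp only [hf, Real.log_exp]
    field_simp
    ring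
  have hderiv : ∀ t ∈ Ioi (0:ℝ), HasDerivWithinAt f (-(σ₁ / t)) (Ioi 0) t := by
    intro t ht
    have : HasDerivAt f (0 - σ₁ * t⁻¹) t := by
      exact (hasDerivAt_const t μ₁).sub ((Real.hasDerivAt_log (ne_of_gt ht)).const_mul σ₁)
    rw [show -(σ₁ / t) = 0 - σ₁ * t⁻¹ by ring]
    exact this.hasDerivWithinAt
  have hinj : InjOn f (Ioi (0:ℝ)) := by
    intro a ha b hb hab
    simp only [hf, sub_right_inj] at hab
    have := mul_left_cancel₀ (ne_of_gt hσ₁) hab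
    exact Real.log_injOn_pos (by simpa using ha) (by simpa using hb) this
  have := integral_image_eq_integral_abs_deriv_smul measurableSet_Ioi hderiv hinj F
  rw [himg] at this
  rw [show (∫ y : ℝ, F y) = ∫ y in univ, F y by rw [Measure.restrict_univ], this]
  apply setIntegral_congr_fun measurableSet_Ioi
  intro t ht
  have ht0 : (0:ℝ) < t := ht
  have h1 : Real.exp (-((f t - μ₁) / σ₁)) = t := by
    simp only [hf]
    rw [show -((μ₁ - σ₁ * Real.log t - μ₁) / σ₁) = Real.log t by field_simp; ring]
    exact Real.exp_log ht0
  have h2 : Real.exp (-((f t - μ₂) / σ₂)) = Real.exp (-((μ₁ - μ₂) / σ₂)) * t ^ (σ₁ / σ₂) := by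
    rw [Real.rpow_def_of_pos ht0, ← Real.exp_add]
    congr 1
    simp only [hf]
    field_simp
    ring
  have habs : |(-(σ₁ / t))| = σ₁ / t := by
    rw [abs_neg, abs_of_pos (div_pos hσ₁ ht0)]
  simp only [smul_eq_mul, hF, h1, h2, habs]
  field_simp

/-- Covariance-type expectation of location scores at two parameter points under the maximum
extreme value distribution with parameters `(μ₁, σ₁)`:
`E[(1 - e^{-(Y-μ₁)/σ₁})(1 - e^{-(Y-μ₂)/σ₂})] = (σ₁/σ₂) Γ(1 + σ₁/σ₂) e^{-(μ₁-μ₂)/σ₂}`. -/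
theorem gumbel_max_score_cross_expectation (μ₁ μ₂ σ₁ σ₂ : ℝ) (hσ₁ : 0 < σ₁) (hσ₂ : 0 < σ₂) :
    ∫ y : ℝ,
        (1 - Real.exp (-((y - μ₁) / σ₁))) * (1 - Real.exp (-((y - μ₂) / σ₂))) *
          ((1 / σ₁) * Real.exp (-((y - μ₁) / σ₁)) * Real.exp (-Real.exp (-((y - μ₁) / σ₁)))) =
      (σ₁ / σ₂) * Real.Gamma (1 + σ₁ / σ₂) * Real.exp (-((μ₁ - μ₂) / σ₂)) := by
  rw [gumbel_aux_change μ₁ μ₂ σ₁ σ₂ hσ₁ hσ₂]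
  set s := σ₁ / σ₂ with hsdef
  have hs0 : 0 < s := div_pos hσ₁ hσ₂
  set c := Real.exp (-((μ₁ - μ₂) / σ₂)) with hc
  -- expand integrand
  have hexpand : ∀ t ∈ Ioi (0:ℝ),
      (1 - t) * (1 - c * t ^ s) * Real.exp (-t) =
        (Real.exp (-t) * t ^ ((1:ℝ) - 1) - Real.exp (-t) * t ^ ((2:ℝ) - 1))
          - c * (Real.exp (-t) * t ^ (s + 1 - 1)) + c * (Real.exp (-t) * t ^ (s + 2 - 1)) := by
    intro t ht
    have ht0 : (0:ℝ) < t := ht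
    have e0 : t ^ ((1:ℝ) - 1) = 1 := by norm_num
    have e1 : t ^ ((2:ℝ) - 1) = t := by norm_num
    have e2 : t ^ (s + 1 - 1) = t ^ s := by norm_num
    have e3 : t ^ (s + 2 - 1) = t ^ s * t := by
      rw [show s + 2 - 1 = s + 1 by ring, Real.rpow_add ht0, Real.rpow_one]
    rw [e0, e1, e2, e3]
    ring
  rw [setIntegral_congr_fun measurableSet_Ioi hexpand]
  have i1 : IntegrableOn (fun t : ℝ => Real.exp (-t) * t ^ ((1:ℝ) - 1)) (Ioi 0) :=
    Real.GammaIntegral_convergent one_pos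
  have i2 : IntegrableOn (fun t : ℝ => Real.exp (-t) * t ^ ((2:ℝ) - 1)) (Ioi 0) :=
    Real.GammaIntegral_convergent two_pos
  have i3 : IntegrableOn (fun t : ℝ => Real.exp (-t) * t ^ (s + 1 - 1)) (Ioi 0) :=
    Real.GammaIntegral_convergent (by linarith)
  have i4 : IntegrableOn (fun t : ℝ => Real.exp (-t) * t ^ (s + 2 - 1)) (Ioi 0) :=
    Real.GammaIntegral_convergent (by linarith)
  rw [integral_add
      (f := fun x : ℝ => Real.exp (-x) * x ^ ((1:ℝ) - 1) - Real.exp (-x) * x ^ ((2:ℝ) - 1)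
        - c * (Real.exp (-x) * x ^ (s + 1 - 1)))
      (g := fun x : ℝ => c * (Real.exp (-x) * x ^ (s + 2 - 1)))
      ((i1.sub i2).sub (i3.const_mul c)) (i4.const_mul c),
    integral_sub
      (f := fun x : ℝ => Real.exp (-x) * x ^ ((1:ℝ) - 1) - Real.exp (-x) * x ^ ((2:ℝ) - 1))
      (g := fun x : ℝ => c * (Real.exp (-x) * x ^ (s + 1 - 1)))
      (i1.sub i2) (i3.const_mul c),
    integral_sub i1 i2,
    integral_const_mul, integral_const_mul,
    ← Real.Gamma_eq_integral one_pos, ← Real.Gamma_eq_integral two_pos,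
    ← Real.Gamma_eq_integral (show (0:ℝ) < s + 1 by linarith),
    ← Real.Gamma_eq_integral (show (0:ℝ) < s + 2 by linarith)]
  have g1 : Real.Gamma 1 = 1 := Real.Gamma_one
  have g2 : Real.Gamma 2 = 1 := by
    rw [show (2:ℝ) = 1 + 1 by norm_num, Real.Gamma_add_one one_ne_zero, g1]; ring
  have g3 : Real.Gamma (s + 2) = (s + 1) * Real.Gamma (s + 1) := by
    rw [show s + 2 = (s + 1) + 1 by ring, Real.Gamma_add_one (by linarith)]
  rw [g1, g2, g3, show (1:ℝ) + s = s + 1 by ring]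
  ring
end
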